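/- If X and X' are finite subsets of abelian groups with X Freiman 6-isomorphic to X', then X +̂ X is Freiman 3-isomorphic to X' +̂ X', and moreover every subset B of X +̂ X is Freiman 3-isomorphic to a subset of X' +̂ X'. -/

import Mathlib

/-- The restricted sumset `X +̂ X = {x + y : x, y ∈ X, x ≠ y}`. -/
def hatAdd {G : Type*} [AddCommGroup G] [DecidableEq G] (X : Finset G) : Finset G :=
  ((X ×ˢ X).filter fun p => p.1 ≠ p.2).image fun p => p.1 + p.2

lemma mem_hatAdd {G : Type*} [AddCommGroup G] [DecidableEq G] {X : Finset G} {a : G} :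
    a ∈ hatAdd X ↔ ∃ x ∈ X, ∃ y ∈ X, x ≠ y ∧ x + y = a := by
  simp only [hatAdd, Finset.mem_image, Finset.mem_filter, Finset.mem_product, Prod.exists]
  constructor
  · rintro ⟨x, y, ⟨⟨hx, hy⟩, hne⟩, rfl⟩
    exact ⟨x, hx, y, hy, hne, rfl⟩
  · rintro ⟨x, hx, y, hy, hne, rfl⟩
    exact ⟨x, y, ⟨⟨hx, hy⟩, hne⟩, rfl⟩

/-- If `X ≅₆ X'` then `X +̂ X ≅₃ X' +̂ X'`, and every `B ⊆ X +̂ X` is Freiman 3-isomorphic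
to some subset of `X' +̂ X'`. -/
theorem hatAdd_freiman_iso {G G' : Type*} [AddCommGroup G] [AddCommGroup G']
    [DecidableEq G] [DecidableEq G'] (X : Finset G) (X' : Finset G') (f : G → G')
    (hf : IsAddFreimanIso 6 (X : Set G) (X' : Set G') f) :
    (∃ g : G → G', IsAddFreimanIso 3 (hatAdd X : Set G) (hatAdd X' : Set G') g) ∧
      ∀ B : Finset G, B ⊆ hatAdd X →
        ∃ C : Finset G', C ⊆ hatAdd X' ∧
          ∃ g : G → G', IsAddFreimanIso 3 (B : Set G) (C : Set G') g := by
  classical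
  have h2 : IsAddFreimanIso 2 (X : Set G) (X' : Set G') f :=
    hf.mono (hmn := by norm_num)
  have hadd : ∀ {a b c d : G}, a ∈ X → b ∈ X → c ∈ X → d ∈ X →
      (f a + f b = f c + f d ↔ a + b = c + d) := by
    intro a b c d ha hb hc hd
    exact h2.add_eq_add ha hb hc hd
  have hdec : ∀ b ∈ hatAdd X, ∃ x y, x ∈ X ∧ y ∈ X ∧ x ≠ y ∧ x + y = b := by
    intro b hb
    obtain ⟨x, hx, y, hy, hne, h⟩ := mem_hatAdd.1 hb
    exact ⟨x, y, hx, hy, hne, h⟩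
  choose! u v hu hv hne huv using hdec
  set g : G → G' := fun b => f (u b) + f (v b) with hg
  -- g maps hatAdd X into hatAdd X'
  have hmaps : Set.MapsTo g (hatAdd X : Set G) (hatAdd X' : Set G') := by
    intro b hb
    simp only [Finset.mem_coe] at hb ⊢
    refine mem_hatAdd.2 ⟨f (u b), ?_, f (v b), ?_, ?_, rfl⟩
    · exact hf.bijOn.mapsTo (hu b hb)
    · exact hf.bijOn.mapsTo (hv b hb)
    · intro h
      exact hne b hb (hf.bijOn.injOn (hu b hb) (hv b hb) h)
  have hinj : Set.InjOn g (hatAdd X : Set G) := by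
    intro b hb c hc h
    simp only [Finset.mem_coe] at hb hc
    have := (hadd (hu b hb) (hv b hb) (hu c hc) (hv c hc)).1 h
    rw [huv b hb, huv c hc] at this
    exact this
  have hsurj : Set.SurjOn g (hatAdd X : Set G) (hatAdd X' : Set G') := by
    intro b' hb'
    simp only [Finset.mem_coe] at hb'
    obtain ⟨x', hx', y', hy', hne', h'⟩ := mem_hatAdd.1 hb'
    obtain ⟨x, hx, rfl⟩ := hf.bijOn.surjOn hx'
    obtain ⟨y, hy, rfl⟩ := hf.bijOn.surjOn hy'
    have hxy : x ≠ y := fun h => hne' (by rw [h])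
    have hb : x + y ∈ hatAdd X := mem_hatAdd.2 ⟨x, hx, y, hy, hxy, rfl⟩
    refine ⟨x + y, hb, ?_⟩
    have : f (u (x + y)) + f (v (x + y)) = f x + f y :=
      (hadd (hu _ hb) (hv _ hb) hx hy).2 (huv _ hb)
    rw [hg]; simp only [this, h']
  have key : ∀ s : Multiset G, (∀ x ∈ s, x ∈ (hatAdd X : Set G)) →
      ∃ S : Multiset G, (∀ x ∈ S, x ∈ (X : Set G)) ∧
        Multiset.card S = 2 * Multiset.card s ∧ S.sum = s.sum ∧
        (S.map f).sum = (s.map g).sum := by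
    intro s hs
    refine ⟨s.bind fun b => {u b, v b}, ?_, ?_, ?_, ?_⟩
    · intro x hx
      obtain ⟨b, hb, hxb⟩ := Multiset.mem_bind.1 hx
      have hb' : b ∈ hatAdd X := hs b hb
      simp only [Multiset.insert_eq_cons, Multiset.mem_cons, Multiset.mem_singleton] at hxb
      rcases hxb with rfl | rfl
      · exact hu b hb'
      · exact hv b hb'
    · simp [Multiset.card_bind, Multiset.map_const', mul_comm, two_mul]; omega
    · rw [Multiset.sum_bind]
      have : s.map (fun b => ({u b, v b} : Multiset G).sum) = s.map id :=
        Multiset.map_congr rfl fun b hb => by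
          simp [huv b (hs b hb)]
      rw [this, Multiset.map_id]
    · rw [Multiset.map_bind, Multiset.sum_bind]
      refine congrArg Multiset.sum (Multiset.map_congr rfl fun b hb => ?_)
      simp [hg]
  have hsum : ∀ ⦃s t : Multiset G⦄, (∀ x ∈ s, x ∈ (hatAdd X : Set G)) →
      (∀ x ∈ t, x ∈ (hatAdd X : Set G)) → Multiset.card s = 3 → Multiset.card t = 3 →
      ((s.map g).sum = (t.map g).sum ↔ s.sum = t.sum) := by
    intro s t hs ht hcs hct
    obtain ⟨S, hSX, hScard, hSsum, hSmap⟩ := key s hs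
    obtain ⟨T, hTX, hTcard, hTsum, hTmap⟩ := key t ht
    rw [← hSsum, ← hTsum, ← hSmap, ← hTmap]
    exact hf.map_sum_eq_map_sum hSX hTX (by rw [hScard, hcs]) (by rw [hTcard, hct])
  have hiso : IsAddFreimanIso 3 (hatAdd X : Set G) (hatAdd X' : Set G') g :=
    ⟨⟨hmaps, hinj, hsurj⟩, hsum⟩
  refine ⟨⟨g, hiso⟩, ?_⟩
  intro B hB
  have hBsub : (B : Set G) ⊆ (hatAdd X : Set G) := by exact_mod_cast hB
  refine ⟨B.image g, ?_, g, ?_⟩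
  · intro c hc
    obtain ⟨b, hb, rfl⟩ := Finset.mem_image.1 hc
    exact_mod_cast hmaps (hBsub hb)
  · refine hiso.subset hBsub ?_
    rw [Finset.coe_image]
    exact (hinj.mono hBsub).bijOn_image
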